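/- Let G be a finite strongly connected directed multigraph and π a vector of positive integers indexed by vertices. Then G has a π-Eulerian tour (a closed walk using each directed edge e exactly π_{tail(e)} times) if and only if Δπ = 0, where Δ is the graph Laplacian. -/

import Mathlib

open Finset

structure Multigraph (V E : Type) where
  tail : E → V
  head : E → V

namespace Multigraph

variable {V E : Type} [Fintype V] [Fintype E] [DecidableEq V] [DecidableEq E]

/-- Outdegree of a vertex. -/
def outdeg (G : Multigraph V E) (v : V) : ℕ :=
  (Finset.univ.filter (fun e => G.tail e = v)).card

/-- Indegree of a vertex. -/
def indeg (G : Multigraph V E) (v : V) : ℕ :=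
  (Finset.univ.filter (fun e => G.head e = v)).card

/-- Number of edges from `u` to `v`. -/
def edgeCount (G : Multigraph V E) (u v : V) : ℕ :=
  (Finset.univ.filter (fun e => G.tail e = u ∧ G.head e = v)).card

/-- Directed graph Laplacian: `Δ u v = d_v δ_{uv} − d_{vu}`. -/
def laplacian (G : Multigraph V E) : Matrix V V ℤ :=
  fun u v => (if u = v then (G.outdeg v : ℤ) else 0) - (G.edgeCount v u : ℤ)

def Adj (G : Multigraph V E) (u v : V) : Prop := ∃ e, G.tail e = u ∧ G.head e = v

/-- Strong connectivity: every vertex reaches every other by a directed path. -/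
def StronglyConnected (G : Multigraph V E) : Prop :=
  ∀ u v : V, Relation.ReflTransGen G.Adj u v

/-- A list of edges forms a walk: consecutive edges are incident. -/
def IsWalk (G : Multigraph V E) : List E → Prop
  | [] => True
  | [_] => True
  | e :: f :: rest => G.head e = G.tail f ∧ G.IsWalk (f :: rest)

/-- A nonempty walk that returns to its starting vertex. -/
def IsClosedWalk (G : Multigraph V E) (w : List E) : Prop :=
  w ≠ [] ∧ G.IsWalk w ∧ w.getLast?.map G.head = w.head?.map G.tail

/-- The walk starts at vertex `v`. -/
def StartsAt (G : Multigraph V E) (w : List E) (v : V) : Prop :=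
  w.head?.map G.tail = some v

/-- A π-Eulerian tour: closed walk using each edge `e` exactly `π (tail e)` times. -/
def IsPiEulerian (G : Multigraph V E) (π : V → ℕ) (w : List E) : Prop :=
  G.IsClosedWalk w ∧ ∀ e : E, w.count e = π (G.tail e)

/-- An Eulerian tour: closed walk using each edge exactly once. -/
def IsEulerian (G : Multigraph V E) (w : List E) : Prop :=
  G.IsClosedWalk w ∧ ∀ e : E, w.count e = 1

/-- A multi-Eulerian tour: closed walk using each edge at least once, and edges
with the same tail equally often. -/
def IsMultiEulerian (G : Multigraph V E) (w : List E) : Prop :=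
  G.IsClosedWalk w ∧ (∀ e : E, 1 ≤ w.count e) ∧
  ∀ e f : E, G.tail e = G.tail f → w.count e = w.count f

/-- A spanning tree oriented toward `w`: every vertex other than `w` has exactly one
outgoing edge, `w` has none, and every vertex reaches `w` inside the subgraph. -/
def IsTreeTo (G : Multigraph V E) (w : V) (T : Finset E) : Prop :=
  (∀ v, v ≠ w → (T.filter (fun e => G.tail e = v)).card = 1) ∧
  (∀ e ∈ T, G.tail e ≠ w) ∧
  ∀ v : V, Relation.ReflTransGen (fun a b => ∃ e ∈ T, G.tail e = a ∧ G.head e = b) v w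

/-- Number of spanning trees oriented toward `w`. -/
noncomputable def treeCount (G : Multigraph V E) (w : V) : ℕ :=
  Nat.card {T : Finset E // G.IsTreeTo w T}

end Multigraph

namespace Multigraph

variable {V E : Type} [Fintype V] [Fintype E] [DecidableEq V] [DecidableEq E]

set_option linter.unusedSectionVars false

def Goes (G : Multigraph V E) : V → List E → V → Prop
  | u, [], v => u = v
  | u, e :: t, v => G.tail e = u ∧ Goes G (G.head e) t v

variable {G : Multigraph V E}

lemma goes_nil {u v : V} : G.Goes u [] v ↔ u = v := Iff.rfl

lemma goes_cons {u v : V} {e : E} {t : List E} :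
    G.Goes u (e :: t) v ↔ G.tail e = u ∧ G.Goes (G.head e) t v := Iff.rfl

lemma Goes.append {u x v : V} {p q : List E} (hp : G.Goes u p x) (hq : G.Goes x q v) :
    G.Goes u (p ++ q) v := by
  induction p generalizing u with
  | nil => rw [goes_nil] at hp; subst hp; simpa using hq
  | cons e t ih => exact ⟨hp.1, ih hp.2⟩

lemma goes_split {u v : V} {p q : List E} (h : G.Goes u (p ++ q) v) :
    ∃ m, G.Goes u p m ∧ G.Goes m q v := by
  induction p generalizing u with
  | nil => exact ⟨u, rfl, h⟩
  | cons e t ih =>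
    obtain ⟨m, h1, h2⟩ := ih h.2
    exact ⟨m, ⟨h.1, h1⟩, h2⟩

lemma Goes.isWalk {u v : V} {w : List E} (h : G.Goes u w v) : G.IsWalk w := by
  induction w generalizing u with
  | nil => trivial
  | cons e t ih =>
    cases t with
    | nil => trivial
    | cons f r => exact ⟨h.2.1.symm, ih h.2⟩

lemma Goes.getLastMap {u v : V} {w : List E} (h : G.Goes u w v) (hne : w ≠ []) :
    w.getLast?.map G.head = some v := by
  induction w generalizing u with
  | nil => exact absurd rfl hne
  | cons e t ih =>
    cases t with
    | nil =>
      have hv : G.head e = v := h.2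
      simp [hv]
    | cons f r =>
      rw [List.getLast?_cons_cons]
      exact ih h.2 (by simp)

lemma isWalk_goes {w : List E} (h : G.IsWalk w) :
    ∀ u v, w.head?.map G.tail = some u → w.getLast?.map G.head = some v → G.Goes u w v := by
  induction w with
  | nil => intro u v h1 _; simp at h1
  | cons e t ih =>
    intro u v h1 h2
    cases t with
    | nil =>
      simp at h1 h2
      exact ⟨h1, h2⟩
    | cons f r =>
      obtain ⟨hef, hw⟩ := h
      refine ⟨by simpa using h1, ?_⟩
      rw [List.getLast?_cons_cons] at h2
      have := ih hw (G.tail f) v (by simp) h2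
      rw [hef]
      exact this

def flowOut (G : Multigraph V E) (w : List E) (x : V) : ℕ :=
  ∑ e ∈ univ.filter (fun e => G.tail e = x), w.count e

def flowIn (G : Multigraph V E) (w : List E) (x : V) : ℕ :=
  ∑ e ∈ univ.filter (fun e => G.head e = x), w.count e

lemma count_sum_filter (p : E → Prop) [DecidablePred p] (e : E) (t : List E) :
    ∑ f ∈ univ.filter p, (e :: t).count f
      = (∑ f ∈ univ.filter p, t.count f) + (if p e then 1 else 0) := by
  simp only [List.count_cons, beq_iff_eq, Finset.sum_add_distrib]
  congr 1
  rw [Finset.sum_ite_eq (univ.filter p) e (fun _ => 1)]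
  simp

lemma flowOut_cons (e : E) (t : List E) (x : V) :
    G.flowOut (e :: t) x = G.flowOut t x + (if G.tail e = x then 1 else 0) :=
  count_sum_filter _ e t

lemma flowIn_cons (e : E) (t : List E) (x : V) :
    G.flowIn (e :: t) x = G.flowIn t x + (if G.head e = x then 1 else 0) :=
  count_sum_filter _ e t

lemma goes_flow {u v : V} {w : List E} (h : G.Goes u w v) (x : V) :
    G.flowOut w x + (if x = v then 1 else 0) = G.flowIn w x + (if x = u then 1 else 0) := by
  induction w generalizing u with
  | nil =>
    have huv : u = v := h
    subst huv
    simp [flowOut, flowIn]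
  | cons e t ih =>
    obtain ⟨he, ht⟩ := h
    have H := ih ht
    rw [flowOut_cons, flowIn_cons]
    subst he
    by_cases h1 : x = G.tail e <;> by_cases h2 : x = G.head e <;>
      simp [h1, h2, Ne.symm, eq_comm] at H ⊢ <;> omega

lemma goes_flow_closed {u : V} {w : List E} (h : G.Goes u w u) (x : V) :
    G.flowOut w x = G.flowIn w x :=
  Nat.add_right_cancel (goes_flow h x)

lemma length_eq_sum_count (w : List E) : w.length = ∑ e, w.count e := by
  induction w with
  | nil => simp
  | cons e t ih =>
    rw [List.length_cons, ih]
    have := count_sum_filter (fun _ => True) e t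
    simpa using this.symm

def Balanced (G : Multigraph V E) (c : E → ℕ) : Prop :=
  ∀ v, ∑ e ∈ univ.filter (fun e => G.tail e = v), c e
      = ∑ e ∈ univ.filter (fun e => G.head e = v), c e

lemma exists_ext {c : E → ℕ} (hb : G.Balanced c) {w : List E} {u x : V}
    (hc : ∀ e, w.count e ≤ c e) (hw : G.Goes u w x) (hne : x ≠ u) :
    ∃ f, G.tail f = x ∧ w.count f < c f := by
  by_contra hcon
  push_neg at hcon
  have hall : ∀ f ∈ univ.filter (fun f => G.tail f = x), w.count f = c f := by
    intro f hf
    exact le_antisymm (hc f) (hcon f (Finset.mem_filter.1 hf).2)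
  have h1 : G.flowOut w x = ∑ e ∈ univ.filter (fun e => G.tail e = x), c e :=
    Finset.sum_congr rfl hall
  have h2 : G.flowIn w x ≤ ∑ e ∈ univ.filter (fun e => G.head e = x), c e :=
    Finset.sum_le_sum (fun e _ => hc e)
  have h3 := goes_flow hw x
  rw [if_pos rfl, if_neg hne] at h3
  have h4 := hb x
  omega

lemma cycle_aux {c : E → ℕ} (hb : G.Balanced c) {u : V} :
    ∀ n (w : List E) (x : V), G.Goes u w x → w ≠ [] → (∀ e, w.count e ≤ c e) →
      (∑ e, c e) ≤ w.length + n →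
      ∃ w', w' ≠ [] ∧ G.Goes u w' u ∧ ∀ e, w'.count e ≤ c e := by
  intro n
  induction n with
  | zero =>
    intro w x hw hne hc hlen
    by_cases hx : x = u
    · exact ⟨w, hne, hx ▸ hw, hc⟩
    · obtain ⟨f, _, hf⟩ := exists_ext hb hc hw hx
      have : ∑ e, w.count e < ∑ e, c e :=
        Finset.sum_lt_sum (fun e _ => hc e) ⟨f, Finset.mem_univ f, hf⟩
      have := length_eq_sum_count w
      omega
  | succ n ih =>
    intro w x hw hne hc hlen
    by_cases hx : x = u
    · exact ⟨w, hne, hx ▸ hw, hc⟩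
    · obtain ⟨f, hfx, hf⟩ := exists_ext hb hc hw hx
      have hw' : G.Goes u (w ++ [f]) (G.head f) :=
        hw.append ⟨hfx, rfl⟩
      refine ih (w ++ [f]) (G.head f) hw' (by simp) ?_ (by simp; omega)
      intro e
      rw [List.count_append]
      by_cases he : e = f
      · subst he
        simp
        omega
      · simp [List.count_singleton, he, Ne.symm he]
        exact hc e

lemma extract_cycle {c : E → ℕ} (hb : G.Balanced c) {e₀ : E} (h₀ : 0 < c e₀) :
    ∃ w, w ≠ [] ∧ G.Goes (G.tail e₀) w (G.tail e₀) ∧ ∀ e, w.count e ≤ c e := by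
  refine cycle_aux hb (∑ e, c e) [e₀] (G.head e₀) ⟨rfl, rfl⟩ (by simp) ?_ (by omega)
  intro e
  by_cases he : e = e₀
  · subst he; simp; omega
  · simp [List.count_singleton, he, Ne.symm he]

def Reach (G : Multigraph V E) (c : E → ℕ) : V → V → Prop :=
  Relation.ReflTransGen (fun a b => ∃ e, 0 < c e ∧ G.tail e = a ∧ G.head e = b)

lemma reach_transfer {c c' : E → ℕ} {S : V → Prop}
    (hS : ∀ g, 0 < c g → c' g = 0 → S (G.tail g) ∧ S (G.head g))
    {y z : V} (h : G.Reach c y z) (hy : ∃ x, S x ∧ G.Reach c' x y) :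
    ∃ x, S x ∧ G.Reach c' x z := by
  induction h with
  | refl => exact hy
  | tail _ step ih =>
    obtain ⟨e, hce, hte, hhe⟩ := step
    by_cases hc' : 0 < c' e
    · obtain ⟨x, hx, hr⟩ := ih
      exact ⟨x, hx, hr.tail ⟨e, hc', hte, hhe⟩⟩
    · have := (hS e hce (Nat.eq_zero_of_not_pos hc')).2
      exact ⟨_, hhe ▸ this, Relation.ReflTransGen.refl⟩

lemma goes_next {u v : V} {w : List E} (h : G.Goes u w v) {g : E} (hg : g ∈ w) :
    G.head g = v ∨ ∃ g' ∈ w, G.tail g' = G.head g := by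
  induction w generalizing u with
  | nil => simp at hg
  | cons e t ih =>
    rcases List.mem_cons.1 hg with rfl | hgt
    · cases t with
      | nil => exact Or.inl h.2
      | cons f r => exact Or.inr ⟨f, by simp, h.2.1⟩
    · rcases ih h.2 hgt with h' | ⟨g', hg', he⟩
      · exact Or.inl h'
      · exact Or.inr ⟨g', by simp [hg'], he⟩

lemma goes_closed_next {u : V} {w : List E} (h : G.Goes u w u) (hne : w ≠ []) {g : E}
    (hg : g ∈ w) : ∃ g' ∈ w, G.tail g' = G.head g := by
  rcases goes_next h hg with h' | h'
  · cases w with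
    | nil => exact absurd rfl hne
    | cons e t => exact ⟨e, by simp, h.1.trans h'.symm⟩
  · exact h'

lemma balanced_sub {c : E → ℕ} (hb : G.Balanced c) {x : V} {w : List E}
    (hw : G.Goes x w x) (hle : ∀ e, w.count e ≤ c e) :
    G.Balanced (fun e => c e - w.count e) := by
  intro v
  rw [Finset.sum_tsub_distrib _ (fun e _ => hle e),
    Finset.sum_tsub_distrib _ (fun e _ => hle e), hb v]
  have := goes_flow_closed hw v
  unfold flowOut flowIn at this
  rw [this]

lemma main_aux :
    ∀ n (c : E → ℕ), G.Balanced c → (∑ e, c e) ≤ n → ∀ u (w₀ : List E), w₀ ≠ [] →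
      G.Goes u w₀ u →
      (∀ e, 0 < c e → ∃ x, (∃ f ∈ w₀, G.tail f = x) ∧ G.Reach c x (G.tail e)) →
      ∃ w, w ≠ [] ∧ G.Goes u w u ∧ ∀ e, w.count e = w₀.count e + c e := by
  intro n
  induction n with
  | zero =>
    intro c _ hsum u w₀ hne hgoes _
    refine ⟨w₀, hne, hgoes, fun e => ?_⟩
    have : c e = 0 := by
      have : c e ≤ ∑ f, c f := Finset.single_le_sum (fun f _ => Nat.zero_le _) (mem_univ e)
      omega
    omega
  | succ n ih =>
    intro c hb hsum u w₀ hne hgoes hreach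
    by_cases hc0 : ∀ e, c e = 0
    · exact ⟨w₀, hne, hgoes, fun e => by rw [hc0 e, Nat.add_zero]⟩
    push_neg at hc0
    obtain ⟨e, he⟩ := hc0
    have hepos : 0 < c e := Nat.pos_of_ne_zero he
    obtain ⟨x, ⟨f, hfw, hft⟩, hr⟩ := hreach e hepos
    -- find an edge with positive count leaving x
    obtain ⟨e₀, he₀x, he₀pos⟩ : ∃ e₀, G.tail e₀ = x ∧ 0 < c e₀ := by
      rcases hr.cases_head with heq | ⟨b, ⟨e', hce', hte', _⟩, _⟩
      · exact ⟨e, heq.symm, hepos⟩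
      · exact ⟨e', hte', hce'⟩
    obtain ⟨w₁, hw₁ne, hw₁goes, hw₁le⟩ := extract_cycle hb he₀pos
    rw [he₀x] at hw₁goes
    -- split w₀ at f
    obtain ⟨a, b, rfl⟩ := List.append_of_mem hfw
    obtain ⟨m, hga, hgb⟩ := goes_split hgoes
    have hmx : m = x := by rw [← hgb.1, hft]
    subst hmx
    set w₀' : List E := a ++ (w₁ ++ f :: b) with hw₀'
    have hgoes' : G.Goes u w₀' u := hga.append (hw₁goes.append hgb)
    have hne' : w₀' ≠ [] := by simp [hw₀']
    set c' : E → ℕ := fun e => c e - w₁.count e with hc'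
    have hble : ∀ e, w₁.count e ≤ c e := hw₁le
    have hb' : G.Balanced c' := balanced_sub hb hw₁goes hble
    have hsum' : ∑ e, c' e ≤ n := by
      have hlt : ∑ e, c' e < ∑ e, c e := by
        obtain ⟨g, hg⟩ : ∃ g, g ∈ w₁ := List.exists_mem_of_ne_nil w₁ hw₁ne
        have hgc : 0 < w₁.count g := List.count_pos_iff.2 hg
        refine Finset.sum_lt_sum (fun i _ => Nat.sub_le _ _) ⟨g, mem_univ g, ?_⟩
        have := hble g
        simp only [hc']
        omega
      omega
    have hS : ∀ g, 0 < c g → c' g = 0 →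
        (∃ f' ∈ w₀', G.tail f' = G.tail g) ∧ (∃ f' ∈ w₀', G.tail f' = G.head g) := by
      intro g hcg hc'g
      have hgw₁ : g ∈ w₁ := by
        have := hble g
        have : 0 < w₁.count g := by simp only [hc'] at hc'g; omega
        exact List.count_pos_iff.1 this
      have hmem : g ∈ w₀' := by simp [hw₀', hgw₁]
      constructor
      · exact ⟨g, hmem, rfl⟩
      · obtain ⟨g', hg'w₁, hg't⟩ := goes_closed_next hw₁goes hw₁ne hgw₁
        exact ⟨g', by simp [hw₀', hg'w₁], hg't⟩
    have hreach' : ∀ e', 0 < c' e' →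
        ∃ x', (∃ f' ∈ w₀', G.tail f' = x') ∧ G.Reach c' x' (G.tail e') := by
      intro e' he'
      have hce' : 0 < c e' := by simp only [hc'] at he'; omega
      obtain ⟨y, ⟨f', hf'w, hf't⟩, hry⟩ := hreach e' hce'
      have hyS : ∃ f'' ∈ w₀', G.tail f'' = y := by
        refine ⟨f', ?_, hf't⟩
        rcases List.mem_append.1 hf'w with h' | h'
        · simp [hw₀', h']
        · simp [hw₀', h']
      exact reach_transfer hS hry ⟨y, hyS, Relation.ReflTransGen.refl⟩
    obtain ⟨w, hwne, hwgoes, hwcount⟩ := ih c' hb' hsum' u w₀' hne' hgoes' hreach'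
    refine ⟨w, hwne, hwgoes, fun e' => ?_⟩
    have h1 := hwcount e'
    have h2 : w₀'.count e' = (a ++ f :: b).count e' + w₁.count e' := by
      simp [hw₀', List.count_append]
      omega
    have := hble e'
    simp only [hc'] at h1
    omega

lemma lap_row (G : Multigraph V E) (π : V → ℕ) (u : V) :
    G.laplacian.mulVec (fun v => (π v : ℤ)) u
      = (∑ e ∈ univ.filter (fun e => G.tail e = u), (π (G.tail e) : ℤ))
        - ∑ e ∈ univ.filter (fun e => G.head e = u), (π (G.tail e) : ℤ) := by
  have h1 : ∑ e ∈ univ.filter (fun e => G.tail e = u), (π (G.tail e) : ℤ)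
      = (G.outdeg u : ℤ) * π u := by
    rw [Finset.sum_congr rfl (fun e he => by rw [(Finset.mem_filter.1 he).2] :
      ∀ e ∈ univ.filter (fun e => G.tail e = u), (π (G.tail e) : ℤ) = (π u : ℤ))]
    rw [Finset.sum_const, outdeg, nsmul_eq_mul]
  have h2 : ∑ e ∈ univ.filter (fun e => G.head e = u), (π (G.tail e) : ℤ)
      = ∑ v, (G.edgeCount v u : ℤ) * π v := by
    rw [← Finset.sum_fiberwise_of_maps_to (g := G.tail) (t := univ)
      (fun e _ => Finset.mem_univ _) (fun e => (π (G.tail e) : ℤ))]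
    refine Finset.sum_congr rfl (fun v _ => ?_)
    rw [Finset.filter_filter]
    have hset : (univ.filter (fun e => G.head e = u ∧ G.tail e = v))
        = univ.filter (fun e => G.tail e = v ∧ G.head e = u) := by
      apply Finset.filter_congr
      intro e _
      simp [and_comm]
    rw [hset]
    rw [Finset.sum_congr rfl (fun e he => by
      rw [(Finset.mem_filter.1 he).2.1] :
      ∀ e ∈ univ.filter (fun e => G.tail e = v ∧ G.head e = u),
        (π (G.tail e) : ℤ) = (π v : ℤ))]
    rw [Finset.sum_const, edgeCount, nsmul_eq_mul]
  rw [h1, h2]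
  simp only [Matrix.mulVec, dotProduct, laplacian, sub_mul]
  rw [Finset.sum_sub_distrib]
  congr 1
  simp only [ite_mul, zero_mul]
  rw [Finset.sum_ite_eq univ u (fun v => (G.outdeg v : ℤ) * π v)]
  simp

lemma balanced_iff (G : Multigraph V E) (π : V → ℕ) :
    G.Balanced (fun e => π (G.tail e)) ↔
      G.laplacian.mulVec (fun v => (π v : ℤ)) = 0 := by
  constructor
  · intro hb
    funext u
    rw [lap_row, Pi.zero_apply, sub_eq_zero]
    exact_mod_cast hb u
  · intro h
    intro u
    have := congrFun h u
    rw [lap_row, Pi.zero_apply, sub_eq_zero] at this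
    exact_mod_cast this

end Multigraph

theorem stmt2 {V E : Type} [Fintype V] [Fintype E] [DecidableEq V] [DecidableEq E]
    [Nonempty E] (G : Multigraph V E) (hsc : G.StronglyConnected)
    (π : V → ℕ) (hπ : ∀ v, 0 < π v) :
    (∃ w : List E, G.IsPiEulerian π w) ↔
      G.laplacian.mulVec (fun v => (π v : ℤ)) = 0 := by
  classical
  constructor
  · rintro ⟨w, ⟨hne, hwalk, hclosed⟩, hcount⟩
    obtain ⟨e, t, rfl⟩ := List.exists_cons_of_ne_nil hne
    have hgoes : G.Goes (G.tail e) (e :: t) (G.tail e) := by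
      refine Multigraph.isWalk_goes hwalk (G.tail e) (G.tail e) (by simp) ?_
      rw [hclosed]; simp
    rw [← Multigraph.balanced_iff]
    intro v
    have hfl := Multigraph.goes_flow_closed hgoes v
    unfold Multigraph.flowOut Multigraph.flowIn at hfl
    calc ∑ e' ∈ Finset.univ.filter (fun e' => G.tail e' = v), π (G.tail e')
        = ∑ e' ∈ Finset.univ.filter (fun e' => G.tail e' = v), (e :: t).count e' :=
          Finset.sum_congr rfl (fun f _ => (hcount f).symm)
      _ = ∑ e' ∈ Finset.univ.filter (fun e' => G.head e' = v), (e :: t).count e' := hfl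
      _ = _ := Finset.sum_congr rfl (fun f _ => hcount f)
  · intro h
    have hb : G.Balanced (fun e => π (G.tail e)) := (Multigraph.balanced_iff G π).2 h
    obtain ⟨e₀⟩ := ‹Nonempty E›
    have h₀ : 0 < π (G.tail e₀) := hπ _
    obtain ⟨w₁, hw₁ne, hw₁goes, hw₁le⟩ := Multigraph.extract_cycle hb h₀
    set c : E → ℕ := fun e => π (G.tail e) with hc
    set c' : E → ℕ := fun e => c e - w₁.count e with hc'
    have hb' : G.Balanced c' := Multigraph.balanced_sub hb hw₁goes hw₁le
    have hreach : ∀ e, 0 < c' e →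
        ∃ x, (∃ f ∈ w₁, G.tail f = x) ∧ G.Reach c' x (G.tail e) := by
      intro e _
      have hS : ∀ g, 0 < c g → c' g = 0 →
          (∃ f ∈ w₁, G.tail f = G.tail g) ∧ (∃ f ∈ w₁, G.tail f = G.head g) := by
        intro g hcg hc'g
        have hg : g ∈ w₁ := List.count_pos_iff.1 (by
          have := hw₁le g
          simp only [hc'] at hc'g
          omega)
        refine ⟨⟨g, hg, rfl⟩, ?_⟩
        obtain ⟨g', hg', ht⟩ := Multigraph.goes_closed_next hw₁goes hw₁ne hg
        exact ⟨g', hg', ht⟩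
      have hrc : G.Reach c (G.tail e₀) (G.tail e) := by
        refine Relation.ReflTransGen.mono ?_ _ _ (hsc (G.tail e₀) (G.tail e))
        rintro a b ⟨f, hfa, hfb⟩
        exact ⟨f, hπ _, hfa, hfb⟩
      have huS : ∃ f ∈ w₁, G.tail f = G.tail e₀ := by
        cases w₁ with
        | nil => exact absurd rfl hw₁ne
        | cons g r => exact ⟨g, by simp, hw₁goes.1⟩
      exact Multigraph.reach_transfer hS hrc ⟨G.tail e₀, huS, Relation.ReflTransGen.refl⟩
    obtain ⟨w, hwne, hwgoes, hwcount⟩ :=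
      Multigraph.main_aux (∑ e, c' e) c' hb' le_rfl (G.tail e₀) w₁ hw₁ne hw₁goes hreach
    refine ⟨w, ⟨hwne, hwgoes.isWalk, ?_⟩, fun e => ?_⟩
    · have h1 := hwgoes.getLastMap hwne
      cases w with
      | nil => exact absurd rfl hwne
      | cons g r =>
        rw [h1]
        simp [hwgoes.1]
    · have h1 := hwcount e
      have h2 := hw₁le e
      simp only [hc', hc] at h1 h2 ⊢
      omega
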